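/- For any n ∈ ℕ and φ ∈ D with φ ≠ 0 (or generally φ₁ = φ₂ = φ), the nth trigonometric moment of a random variable Z on the unit circle with density f(z) = (1/2π)·((1+|φ|²)⁻¹·(1−|φ|²))·((1−|φ|²)/|z−φ|²)² satisfies E(Zⁿ) = [(1+n+(1−n)|φ|²)/(1+|φ|²)]·φⁿ. -/

import Mathlib

open Real Complex intervalIntegral Metric Set

set_option maxHeartbeats 1000000 in
/-- The `n`th trigonometric moment of the EWC-type distribution on the unit circle with
`φ₁ = φ₂ = φ ≠ 0`: the density (with respect to arc length) is
`f(z) = (1/2π)·(1-|φ|²)³ / ((1+|φ|²)·|z-φ|⁴)`, and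
`E(Zⁿ) = ((1+n+(1-n)|φ|²)/(1+|φ|²))·φⁿ`. -/
theorem ewc_trig_moment_equal_params (n : ℕ) (φ : ℂ) (hφ : ‖φ‖ < 1) (hφ0 : φ ≠ 0) :
    ∫ θ in (-Real.pi)..Real.pi,
      (Complex.exp (θ * Complex.I)) ^ n *
        (((1 / (2 * Real.pi)) * (1 - ‖φ‖ ^ 2) ^ 3 /
          ((1 + ‖φ‖ ^ 2) *
            ‖Complex.exp (θ * Complex.I) - φ‖ ^ 4) : ℝ) : ℂ)
      = ((1 + (n : ℂ) + (1 - (n : ℂ)) * ((‖φ‖ ^ 2 : ℝ) : ℂ)) /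
          (1 + ((‖φ‖ ^ 2 : ℝ) : ℂ))) * φ ^ n := by
  set cφ : ℂ := (starRingEnd ℂ) φ with hcφ
  set t : ℂ := ((‖φ‖ ^ 2 : ℝ) : ℂ) with ht
  have hr0 : 0 < ‖φ‖ := norm_pos_iff.mpr hφ0
  have hw : cφ * φ = t := by
    rw [ht, hcφ, mul_comm, Complex.mul_conj, Complex.normSq_eq_norm_sq]
  have habs2 : ‖t‖ < 1 := by
    rw [ht, Complex.norm_real, Real.norm_of_nonneg (by positivity)]
    nlinarith
  have h1t : (1 : ℂ) - t ≠ 0 := by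
    intro h; apply absurd habs2
    have : t = 1 := by linear_combination -h
    simp [this]
  have h1t' : (1 : ℂ) + t ≠ 0 := by
    intro h
    have : t = -1 := by linear_combination h
    rw [this] at habs2; simp at habs2
  -- the holomorphic function f
  set f : ℂ → ℂ := fun z => z ^ (n + 1) / (1 - cφ * z) ^ 2 with hf
  have hden : ∀ z : ℂ, ‖z‖ < (‖φ‖)⁻¹ → (1 - cφ * z) ≠ 0 := by
    intro z hz h
    have h1 : (1 : ℂ) = cφ * z := by linear_combination h
    have := congrArg (‖·‖) h1
    rw [norm_mul] at this
    simp only [norm_one, hcφ, Complex.norm_conj] at this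
    rcases eq_or_lt_of_le (norm_nonneg z) with h0 | h0
    · rw [← h0] at this; simp at this
    · have : ‖z‖ = (‖φ‖)⁻¹ := by
        field_simp at this ⊢; linarith [this]
      linarith [hz, this]
  have hone_lt : (1 : ℝ) < (‖φ‖)⁻¹ := (one_lt_inv₀ hr0).2 hφ
  have hfd : DifferentiableOn ℂ f (ball (0 : ℂ) (‖φ‖)⁻¹) := by
    apply DifferentiableOn.div
    · exact (differentiable_pow _).differentiableOn
    · exact fun z hz => (((differentiableAt_const (1:ℂ)).sub ((differentiableAt_id).const_mul cφ)).pow 2).differentiableWithinAt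
    · intro z hz
      exact pow_ne_zero 2 (hden z (by simpa [mem_ball, Complex.dist_eq] using hz))
  have hφmem : φ ∈ ball (0 : ℂ) (‖φ‖)⁻¹ := by
    simp only [mem_ball, Complex.dist_eq, sub_zero]
    nlinarith
  have hgd : DifferentiableOn ℂ (dslope f φ) (closedBall (0 : ℂ) 1) :=
    ((Complex.differentiableOn_dslope (isOpen_ball.mem_nhds hφmem)).2 hfd).mono
      (closedBall_subset_ball hone_lt)
  have hφball : φ ∈ ball (0 : ℂ) 1 := by
    simpa [mem_ball, Complex.dist_eq] using hφ
  -- Cauchy integral formula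
  have hI1 : (∮ z in C(0, 1), (z - φ)⁻¹ • dslope f φ z)
      = (2 * (π : ℂ) * I) • dslope f φ φ :=
    hgd.circleIntegral_sub_inv_smul hφball
  have hI2 : (∮ z in C(0, 1), f φ • (z - φ) ^ (-2 : ℤ)) = 0 := by
    rw [circleIntegral.integral_smul, circleIntegral.integral_sub_zpow_of_ne (by decide),
      smul_zero]
  -- derivative of f at φ
  have h1tφ : (1 : ℂ) - cφ * φ ≠ 0 := by rw [hw]; exact h1t
  have hfderiv : HasDerivAt f
      ((((n : ℂ) + 1) * φ ^ n * (1 - cφ * φ) ^ 2 -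
        φ ^ (n + 1) * (2 * (1 - cφ * φ) ^ 1 * (0 - cφ * 1))) / ((1 - cφ * φ) ^ 2) ^ 2) φ := by
    have h1 : HasDerivAt (fun z : ℂ => z ^ (n + 1)) (((n : ℂ) + 1) * φ ^ n) φ := by
      simpa using hasDerivAt_pow (n + 1) φ
    have h2 : HasDerivAt (fun z : ℂ => (1 - cφ * z) ^ 2)
        (2 * (1 - cφ * φ) ^ 1 * (0 - cφ * 1)) φ :=
      ((hasDerivAt_const φ (1 : ℂ)).sub ((hasDerivAt_id φ).const_mul cφ)).pow 2
    exact h1.div h2 (pow_ne_zero 2 h1tφ)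
  have hval : deriv f φ = φ ^ n * ((1 + (n : ℂ)) + (1 - (n : ℂ)) * t) / (1 - t) ^ 3 := by
    rw [hfderiv.deriv, hw]
    have hp : φ ^ (n + 1) * cφ = φ ^ n * t := by
      rw [pow_succ, mul_assoc, mul_comm φ cφ, hw]
    field_simp
    ring_nf
    linear_combination 2 * hp
  -- circle integrability
  have hsph : ∀ z ∈ sphere (0 : ℂ) 1, z ≠ φ := by
    intro z hz h
    rw [mem_sphere_iff_norm, sub_zero] at hz
    rw [h] at hz
    exact absurd hz (by simpa using hφ.ne)
  have hg1int : CircleIntegrable (fun z => (z - φ)⁻¹ • dslope f φ z) 0 1 := by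
    apply ContinuousOn.circleIntegrable (by norm_num)
    exact (((continuousOn_id.sub continuousOn_const).inv₀
      (fun z hz => sub_ne_zero.2 (hsph z hz))).smul
      ((hgd.continuousOn).mono sphere_subset_closedBall))
  have hg2int : CircleIntegrable (fun z => f φ • (z - φ) ^ (-2 : ℤ)) 0 1 := by
    apply ContinuousOn.circleIntegrable (by norm_num)
    exact (ContinuousOn.smul (f := fun _ => f φ) (g := fun z => (z - φ) ^ (-2 : ℤ)) continuousOn_const) (((continuousOn_id.sub continuousOn_const).zpow₀ (-2)
      (fun z hz => Or.inl (sub_ne_zero.2 (hsph z hz)))))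
  -- periodicity
  have hexp : Function.Periodic (fun θ : ℝ => Complex.exp (θ * I)) (2 * π) := by
    intro θ
    simp only
    push_cast
    rw [add_mul, Complex.exp_add, Complex.exp_two_pi_mul_I, mul_one]
  have hper : Function.Periodic (fun θ : ℝ =>
      (Complex.exp (θ * Complex.I)) ^ n *
        (((1 / (2 * Real.pi)) * (1 - ‖φ‖ ^ 2) ^ 3 /
          ((1 + ‖φ‖ ^ 2) *
            ‖Complex.exp (θ * Complex.I) - φ‖ ^ 4) : ℝ) : ℂ)) (2 * π) :=
    hexp.comp (fun z => z ^ n *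
        (((1 / (2 * Real.pi)) * (1 - ‖φ‖ ^ 2) ^ 3 /
          ((1 + ‖φ‖ ^ 2) * ‖z - φ‖ ^ 4) : ℝ) : ℂ))
  have hshift := hper.intervalIntegral_add_eq (-π) 0
  rw [show -π + 2 * π = π by ring, zero_add] at hshift
  rw [hshift]
  -- the constant
  set C : ℂ := (-I) * ((1 / (2 * (π : ℂ))) * (1 - t) ^ 3 / (1 + t)) with hC
  have key : ∀ θ : ℝ,
      (Complex.exp (θ * Complex.I)) ^ n *
        (((1 / (2 * Real.pi)) * (1 - ‖φ‖ ^ 2) ^ 3 /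
          ((1 + ‖φ‖ ^ 2) *
            ‖Complex.exp (θ * Complex.I) - φ‖ ^ 4) : ℝ) : ℂ)
      = C * ((circleMap 0 1 θ * I) *
          ((circleMap 0 1 θ - φ)⁻¹ * dslope f φ (circleMap 0 1 θ)
            + f φ * (circleMap 0 1 θ - φ) ^ (-2 : ℤ))) := by
    intro θ
    have hcm : circleMap 0 1 θ = Complex.exp (θ * I) := by
      simp [circleMap]
    set z : ℂ := Complex.exp (θ * I) with hzdef
    rw [hcm]
    have hz1 : ‖z‖ = 1 := Complex.norm_exp_ofReal_mul_I θ
    have hz0 : z ≠ 0 := by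
      intro h; rw [h] at hz1; simp at hz1
    have hzφ : z - φ ≠ 0 := by
      intro h
      have : z = φ := by linear_combination h
      rw [this] at hz1; exact absurd hz1 hφ.ne
    have hzden : (1 : ℂ) - cφ * z ≠ 0 := by
      intro h
      have h1 : (1 : ℂ) = cφ * z := by linear_combination h
      have := congrArg (‖·‖) h1
      rw [norm_mul, hcφ, Complex.norm_conj, hz1, mul_one] at this
      simp only [norm_one] at this
      exact absurd this.symm hφ.ne
    have hconj : (starRingEnd ℂ) z = z⁻¹ := by
      rw [hzdef, ← Complex.exp_conj, ← Complex.exp_neg]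
      congr 1
      simp [Complex.conj_ofReal]
    have hA : ((‖z - φ‖ : ℝ) : ℂ) ^ 4
        = ((z - φ) * (z⁻¹ - cφ)) ^ 2 := by
      have h2 : ((‖z - φ‖ : ℝ) : ℂ) ^ 2 = (z - φ) * ((starRingEnd ℂ) (z - φ)) := by
        rw [← Complex.ofReal_pow, Complex.sq_norm]
        exact (Complex.mul_conj _).symm
      calc ((‖z - φ‖ : ℝ) : ℂ) ^ 4
          = (((‖z - φ‖ : ℝ) : ℂ) ^ 2) ^ 2 := by ring
        _ = ((z - φ) * (z⁻¹ - cφ)) ^ 2 := by rw [h2, map_sub, hconj, hcφ]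
    have hds : dslope f φ z = (f z - f φ) / (z - φ) := by
      rw [dslope_of_ne f (sub_ne_zero.mp hzφ), slope_def_field]
    have hπ : ((π : ℝ) : ℂ) ≠ 0 := Complex.ofReal_ne_zero.2 Real.pi_ne_zero
    have ht' : ((‖φ‖ : ℝ) : ℂ) ^ 2 = t := by rw [ht]; push_cast; ring
    have hzz : z * (z⁻¹ - cφ) = 1 - cφ * z := by
      field_simp
    have ha4 : ((‖z - φ‖ : ℝ) : ℂ) ^ 4 = ((z - φ) * (1 - cφ * z)) ^ 2 / z ^ 2 := by
      rw [eq_div_iff (pow_ne_zero 2 hz0), hA]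
      calc ((z - φ) * (z⁻¹ - cφ)) ^ 2 * z ^ 2
          = ((z - φ) * (z * (z⁻¹ - cφ))) ^ 2 := by ring
        _ = _ := by rw [hzz]
    have hzp : (z - φ) ^ (-2 : ℤ) = ((z - φ) ^ 2)⁻¹ := by
      rw [zpow_neg]
      norm_cast
    have hg : (z - φ)⁻¹ * ((f z - f φ) / (z - φ)) + f φ * ((z - φ) ^ 2)⁻¹
        = f z / (z - φ) ^ 2 := by
      field_simp
      ring
    rw [hds, hzp, hg]
    simp only [hf]
    push_cast
    rw [ht', ha4, hC]
    field_simp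
    ring_nf
    simp only [Complex.I_sq]
    ring
  rw [intervalIntegral.integral_congr (fun θ _ => key θ),
    intervalIntegral.integral_const_mul]
  have hint1 : IntervalIntegrable (fun θ : ℝ => (circleMap 0 1 θ * I) *
      ((circleMap 0 1 θ - φ)⁻¹ * dslope f φ (circleMap 0 1 θ)))
      MeasureTheory.volume 0 (2 * π) := by
    simpa only [deriv_circleMap, smul_eq_mul] using hg1int.out
  have hint2 : IntervalIntegrable (fun θ : ℝ => (circleMap 0 1 θ * I) *
      (f φ * (circleMap 0 1 θ - φ) ^ (-2 : ℤ)))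
      MeasureTheory.volume 0 (2 * π) := by
    simpa only [deriv_circleMap, smul_eq_mul] using hg2int.out
  have hsplit : (∫ θ in (0 : ℝ)..2 * π, (circleMap 0 1 θ * I) *
        ((circleMap 0 1 θ - φ)⁻¹ * dslope f φ (circleMap 0 1 θ)
          + f φ * (circleMap 0 1 θ - φ) ^ (-2 : ℤ)))
      = (∮ z in C(0, 1), (z - φ)⁻¹ • dslope f φ z)
        + (∮ z in C(0, 1), f φ • (z - φ) ^ (-2 : ℤ)) := by
    have hfe : (fun θ : ℝ => (circleMap 0 1 θ * I) *
        ((circleMap 0 1 θ - φ)⁻¹ * dslope f φ (circleMap 0 1 θ)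
          + f φ * (circleMap 0 1 θ - φ) ^ (-2 : ℤ)))
        = fun θ : ℝ => (circleMap 0 1 θ * I) *
            ((circleMap 0 1 θ - φ)⁻¹ * dslope f φ (circleMap 0 1 θ))
          + (circleMap 0 1 θ * I) * (f φ * (circleMap 0 1 θ - φ) ^ (-2 : ℤ)) := by
      funext θ; ring
    rw [hfe, intervalIntegral.integral_add hint1 hint2]
    simp only [circleIntegral, deriv_circleMap, smul_eq_mul]
  rw [hsplit, hI1, hI2, add_zero, dslope_same, hval, smul_eq_mul, hC]
  have hπ : ((π : ℝ) : ℂ) ≠ 0 := Complex.ofReal_ne_zero.2 Real.pi_ne_zero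
  field_simp
  ring_nf
  simp only [Complex.I_sq]
  ring
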